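/- arXiv:2109.11537 — 2 statements merged into one kernel-verified Lean document; each statement's English description precedes it below -/
import Mathlib

section
/- Let 1 < p < ∞ and t, y ∈ ℝ, and let l = p·|t|^{p−2}·t (the derivative of |t|^p). Then |t|^p + l·y + ((p−1)/(p·2^p))·γ_p(|t|, y) ≤ |t + y|^p ≤ |t|^p + l·y + 2^p·γ_p(|t|, y). -/
open Real Set

/-- The smoothed `p`-norm function `γ_p(t,y)`. -/
noncomputable def gammaFn (p t y : ℝ) : ℝ :=
  if |y| ≤ t then (p / 2) * t ^ (p - 2) * y ^ 2
  else |y| ^ p + (p / 2 - 1) * t ^ p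

namespace Stmt15Aux

/-- tangent line of `2 ^ x` at `0`, shifted: `2 ^ x ≥ 1 + x log 2`. -/
lemma two_rpow_tangent (x : ℝ) : 1 + x * Real.log 2 ≤ (2 : ℝ) ^ x := by
  rw [Real.rpow_def_of_pos (by norm_num : (0:ℝ) < 2)]
  have h := Real.add_one_le_exp (Real.log 2 * x)
  nlinarith [h]

lemma log_two_ge : (5/8 : ℝ) ≤ Real.log 2 := by
  have := Real.log_two_gt_d9; norm_num at this ⊢; linarith

lemma one_le_two_rpow {p : ℝ} (h : 0 ≤ p) : (1:ℝ) ≤ 2 ^ p := by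
  have := Real.rpow_le_rpow_of_exponent_le (by norm_num : (1:ℝ) ≤ 2) h
  simpa using this

lemma two_le_two_rpow {p : ℝ} (h : 1 ≤ p) : (2:ℝ) ≤ 2 ^ p := by
  have := Real.rpow_le_rpow_of_exponent_le (by norm_num : (1:ℝ) ≤ 2) h
  simpa using this

lemma two_rpow_pos (p : ℝ) : (0:ℝ) < 2 ^ p := Real.rpow_pos_of_pos (by norm_num) p

lemma one_add_p_le {p : ℝ} (hp : 1 < p) : 1 + p ≤ (2:ℝ) ^ p := by
  have h := one_add_mul_self_le_rpow_one_add (by norm_num : (-1:ℝ) ≤ 1) hp.le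
  norm_num at h
  exact h

lemma two_rpow_split {p : ℝ} : (2:ℝ) ^ p = 2 * 2 ^ (p - 1) := by
  rw [show p = 1 + (p - 1) by ring, Real.rpow_add (by norm_num : (0:ℝ) < 2), Real.rpow_one]
  ring_nf

/-- chord bound: `2 ^ p ≤ 2 p` for `1 ≤ p ≤ 2`. -/
lemma two_rpow_le_chord {p : ℝ} (h1 : 1 ≤ p) (h2 : p ≤ 2) : (2:ℝ) ^ p ≤ 2 * p := by
  have h := convexOn_exp.2 (Set.mem_univ (Real.log 2)) (Set.mem_univ (2 * Real.log 2))
    (by linarith : (0:ℝ) ≤ 2 - p) (by linarith : (0:ℝ) ≤ p - 1) (by ring)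
  simp only [smul_eq_mul] at h
  have e1 : (2 - p) * Real.log 2 + (p - 1) * (2 * Real.log 2) = Real.log 2 * p := by ring
  rw [e1] at h
  have e2 : Real.exp (Real.log 2 * p) = (2:ℝ) ^ p :=
    (Real.rpow_def_of_pos (by norm_num : (0:ℝ) < 2) p).symm
  have e3 : Real.exp (Real.log 2) = 2 := Real.exp_log (by norm_num)
  have e4 : Real.exp (2 * Real.log 2) = 4 := by
    rw [two_mul, Real.exp_add, e3]; norm_num
  rw [e2, e3, e4] at h
  nlinarith [h]

section Pointwise

variable {p : ℝ}

/-- P1 : `1 + ((p-1)/2^p)(u-1) ≤ u^(p-1)` on `[1,2]`. -/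
lemma P1 (hp : 1 < p) {u : ℝ} (h1 : 1 ≤ u) (h2 : u ≤ 2) :
    1 + (p - 1) / 2 ^ p * (u - 1) ≤ u ^ (p - 1) := by
  have h2p := two_rpow_pos p
  have h2ge := two_le_two_rpow hp.le
  rcases le_or_gt 1 (p - 1) with hq | hq
  · have hB := one_add_mul_self_le_rpow_one_add (show (-1:ℝ) ≤ u - 1 by linarith) hq
    rw [show (1:ℝ) + (u - 1) = u by ring] at hB
    have hco : (p - 1) / 2 ^ p ≤ p - 1 := div_le_self (by linarith) (by linarith)
    nlinarith [sub_nonneg.2 h1]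
  · have hcc := (Real.concaveOn_rpow (by linarith : (0:ℝ) ≤ p - 1) (by linarith)).2
      (Set.mem_Ici.2 (by norm_num : (0:ℝ) ≤ 1)) (Set.mem_Ici.2 (by norm_num : (0:ℝ) ≤ 2))
      (show (0:ℝ) ≤ 2 - u by linarith) (show (0:ℝ) ≤ u - 1 by linarith) (by ring)
    simp only [smul_eq_mul, Real.one_rpow] at hcc
    rw [show (2 - u) * 1 + (u - 1) * 2 = u by ring] at hcc
    have ht := two_rpow_tangent (p - 1)
    have hl := log_two_ge
    -- (p-1)/2^p ≤ (p-1) * log 2 ≤ 2^(p-1) - 1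
    have hk : (p - 1) / 2 ^ p ≤ (p - 1) * Real.log 2 := by
      rw [div_le_iff₀ h2p]
      nlinarith [mul_nonneg (show (0:ℝ) ≤ p - 1 by linarith) (show (0:ℝ) ≤ Real.log 2 by linarith)]
    nlinarith [sub_nonneg.2 h1, mul_le_mul_of_nonneg_left hk (sub_nonneg.2 h1)]

/-- P2 : `u^(p-1) ≤ 1 - ((p-1)/2^p)(1-u)` on `[0,1]`. -/
lemma P2 (hp : 1 < p) {u : ℝ} (h0 : 0 ≤ u) (h1 : u ≤ 1) :
    u ^ (p - 1) ≤ 1 - (p - 1) / 2 ^ p * (1 - u) := by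
  have h2p := two_rpow_pos p
  have hco1 : (p - 1) / 2 ^ p ≤ p - 1 := div_le_self (by linarith) (one_le_two_rpow (by linarith))
  have hco2 : (p - 1) / 2 ^ p ≤ 1 := by
    have := one_add_p_le hp
    rw [div_le_one h2p]; linarith
  rcases eq_or_lt_of_le h0 with h | h
  · rw [← h, Real.zero_rpow (by linarith : p - 1 ≠ 0)]
    nlinarith
  rcases le_or_gt 1 (p - 1) with hq | hq
  · have : u ^ (p - 1) ≤ u ^ (1:ℝ) := Real.rpow_le_rpow_of_exponent_ge h h1 hq
    rw [Real.rpow_one] at this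
    nlinarith
  · have hB := rpow_one_add_le_one_add_mul_self (show (-1:ℝ) ≤ u - 1 by linarith)
      (by linarith : (0:ℝ) ≤ p - 1) hq.le
    rw [show (1:ℝ) + (u - 1) = u by ring] at hB
    nlinarith

/-- P3 : `u^(p-1) ≤ 1 + 2^p (u-1)` on `[1,2]`. -/
lemma P3 (hp : 1 < p) {u : ℝ} (h1 : 1 ≤ u) (h2 : u ≤ 2) :
    u ^ (p - 1) ≤ 1 + 2 ^ p * (u - 1) := by
  have h2p := two_rpow_pos p
  have h2ge := one_le_two_rpow (show (0:ℝ) ≤ p by linarith)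
  rcases le_or_gt (p - 1) 1 with hq | hq
  · have hB := rpow_one_add_le_one_add_mul_self (show (-1:ℝ) ≤ u - 1 by linarith)
      (by linarith : (0:ℝ) ≤ p - 1) hq
    rw [show (1:ℝ) + (u - 1) = u by ring] at hB
    nlinarith [sub_nonneg.2 h1]
  · have hcc := (convexOn_rpow (by linarith : (1:ℝ) ≤ p - 1)).2
      (Set.mem_Ici.2 (by norm_num : (0:ℝ) ≤ 1)) (Set.mem_Ici.2 (by norm_num : (0:ℝ) ≤ 2))
      (show (0:ℝ) ≤ 2 - u by linarith) (show (0:ℝ) ≤ u - 1 by linarith) (by ring)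
    simp only [smul_eq_mul, Real.one_rpow] at hcc
    rw [show (2 - u) * 1 + (u - 1) * 2 = u by ring] at hcc
    have hq2 : (2:ℝ) ^ (p - 1) ≤ 2 ^ p :=
      Real.rpow_le_rpow_of_exponent_le (by norm_num) (by linarith)
    nlinarith [sub_nonneg.2 h1]

/-- P4 : `1 - 2^p (1-u) ≤ u^(p-1)` on `[0,1]`. -/
lemma P4 (hp : 1 < p) {u : ℝ} (h0 : 0 ≤ u) (h1 : u ≤ 1) :
    1 - 2 ^ p * (1 - u) ≤ u ^ (p - 1) := by
  have h2p := two_rpow_pos p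
  have h2ge := one_le_two_rpow (show (0:ℝ) ≤ p by linarith)
  rcases eq_or_lt_of_le h0 with h | h
  · rw [← h, Real.zero_rpow (by linarith : p - 1 ≠ 0)]
    nlinarith
  rcases le_or_gt (p - 1) 1 with hq | hq
  · have : u ^ (1:ℝ) ≤ u ^ (p - 1) := Real.rpow_le_rpow_of_exponent_ge h h1 hq
    rw [Real.rpow_one] at this
    nlinarith
  · have hB := one_add_mul_self_le_rpow_one_add (show (-1:ℝ) ≤ u - 1 by linarith) hq.le
    rw [show (1:ℝ) + (u - 1) = u by ring] at hB
    have hq2 : p - 1 ≤ 2 ^ p := by have := one_add_p_le hp; linarith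
    nlinarith [sub_nonneg.2 h1]

/-- P5 : `1 + c y^(p-1) ≤ (1+y)^(p-1)` for `y ≥ 1`, `c = (p-1)/(p 2^p)`. -/
lemma P5 (hp : 1 < p) {y : ℝ} (hy : 1 ≤ y) :
    1 + (p - 1) / (p * 2 ^ p) * y ^ (p - 1) ≤ (1 + y) ^ (p - 1) := by
  have h2p := two_rpow_pos p
  have hq2p := two_rpow_pos (p - 1)
  have hc0 : 0 ≤ (p - 1) / (p * 2 ^ p) := div_nonneg (by linarith) (by positivity)
  have h1 : y ^ (p - 1) ≤ (1 + y) ^ (p - 1) :=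
    Real.rpow_le_rpow (by linarith) (by linarith) (by linarith)
  have h2 : (2:ℝ) ^ (p - 1) ≤ (1 + y) ^ (p - 1) :=
    Real.rpow_le_rpow (by norm_num) (by linarith) (by linarith)
  -- c * 2^(p-1) = (p-1)/(2p) ≤ (p-1) log 2 ≤ 2^(p-1) - 1
  have hcs : (p - 1) / (p * 2 ^ p) * 2 ^ (p - 1) = (p - 1) / (2 * p) := by
    rw [two_rpow_split]
    field_simp
  have ht := two_rpow_tangent (p - 1)
  have hl := log_two_ge
  have hkey : (p - 1) / (p * 2 ^ p) * 2 ^ (p - 1) ≤ 2 ^ (p - 1) - 1 := by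
    rw [hcs]
    have : (p - 1) / (2 * p) ≤ (p - 1) * (5/8) := by
      rw [div_le_iff₀ (by linarith : (0:ℝ) < 2 * p)]
      nlinarith
    nlinarith
  have hc1 : (p - 1) / (p * 2 ^ p) ≤ 1 := by
    rw [div_le_one (by positivity)]
    nlinarith [one_le_two_rpow (show (0:ℝ) ≤ p by linarith)]
  have hmono := mul_le_mul_of_nonneg_left h2 (show (0:ℝ) ≤ 1 - (p - 1) / (p * 2 ^ p) by linarith)
  have hy' := mul_le_mul_of_nonneg_left h1 hc0
  nlinarith [hmono, hy', hkey]
/-- P6 : `c u^(p-1) ≤ (u-1)^(p-1) + 1` for `u ≥ 1`. -/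
lemma P6 (hp : 1 < p) {u : ℝ} (hu : 1 ≤ u) :
    (p - 1) / (p * 2 ^ p) * u ^ (p - 1) ≤ (u - 1) ^ (p - 1) + 1 := by
  have h2p := two_rpow_pos p
  have hq2p := two_rpow_pos (p - 1)
  have hc0 : 0 ≤ (p - 1) / (p * 2 ^ p) := div_nonneg (by linarith) (by positivity)
  have hcs : (p - 1) / (p * 2 ^ p) * 2 ^ (p - 1) = (p - 1) / (2 * p) := by
    rw [two_rpow_split]; field_simp
  have hhalf : (p - 1) / (2 * p) ≤ 1 := by
    rw [div_le_one (by linarith : (0:ℝ) < 2 * p)]; linarith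
  have hpow0 : (0:ℝ) ≤ (u - 1) ^ (p - 1) := Real.rpow_nonneg (by linarith) _
  rcases le_total u 2 with h | h
  · have hu1 : u ^ (p - 1) ≤ 2 ^ (p - 1) :=
      Real.rpow_le_rpow (by linarith) h (by linarith)
    have := mul_le_mul_of_nonneg_left hu1 hc0
    nlinarith
  · have hle : u ≤ 2 * (u - 1) := by linarith
    have h1 : u ^ (p - 1) ≤ (2 * (u - 1)) ^ (p - 1) :=
      Real.rpow_le_rpow (by linarith) hle (by linarith)
    rw [Real.mul_rpow (by norm_num) (by linarith)] at h1
    have h2 := mul_le_mul_of_nonneg_left h1 hc0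
    have e : (p - 1) / (p * 2 ^ p) * (2 ^ (p - 1) * (u - 1) ^ (p - 1))
        = (p - 1) / (2 * p) * (u - 1) ^ (p - 1) := by
      rw [← mul_assoc, hcs]
    rw [e] at h2
    nlinarith [mul_le_mul_of_nonneg_right hhalf hpow0]

end Pointwise

section Derivs

variable {p : ℝ}

lemma hasDerivAt_G (hp : 1 ≤ p) (a b x : ℝ) :
    HasDerivAt (fun y : ℝ => (1 + y) ^ p - a * y - b * y ^ 2)
      (p * (1 + x) ^ (p - 1) - a - 2 * b * x) x := by
  have h1 : HasDerivAt (fun y : ℝ => 1 + y) 1 x := by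
    simpa using (hasDerivAt_id x).const_add (1:ℝ)
  have h2 := h1.rpow_const (p := p) (Or.inr hp)
  have h3 : HasDerivAt (fun y : ℝ => a * y) a x := by
    simpa using (hasDerivAt_id x).const_mul a
  have h4 : HasDerivAt (fun y : ℝ => b * y ^ 2) (b * (2 * x)) x := by
    simpa using (hasDerivAt_pow 2 x).const_mul b
  refine ((h2.sub h3).sub h4).congr_deriv ?_
  ring

lemma hasDerivAt_H (hp : 1 ≤ p) (a b x : ℝ) :
    HasDerivAt (fun y : ℝ => 1 + a * y + b * y ^ 2 - (1 + y) ^ p)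
      (a + 2 * b * x - p * (1 + x) ^ (p - 1)) x := by
  have h1 : HasDerivAt (fun y : ℝ => 1 + y) 1 x := by
    simpa using (hasDerivAt_id x).const_add (1:ℝ)
  have h2 := h1.rpow_const (p := p) (Or.inr hp)
  have h3 : HasDerivAt (fun y : ℝ => a * y) a x := by
    simpa using (hasDerivAt_id x).const_mul a
  have h4 : HasDerivAt (fun y : ℝ => b * y ^ 2) (b * (2 * x)) x := by
    simpa using (hasDerivAt_pow 2 x).const_mul b
  have h5 : HasDerivAt (fun y : ℝ => 1 + a * y + b * y ^ 2) (a + b * (2 * x)) x := by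
    exact (h3.const_add 1).add h4
  refine (h5.sub h2).congr_deriv ?_
  ring

lemma hasDerivAt_D (hp : 1 ≤ p) (c x : ℝ) :
    HasDerivAt (fun y : ℝ => (1 + y) ^ p - p * y - c * y ^ p)
      (p * (1 + x) ^ (p - 1) - p - c * (p * x ^ (p - 1))) x := by
  have h1 : HasDerivAt (fun y : ℝ => 1 + y) 1 x := by
    simpa using (hasDerivAt_id x).const_add (1:ℝ)
  have h2 := h1.rpow_const (p := p) (Or.inr hp)
  have h3 : HasDerivAt (fun y : ℝ => p * y) p x := by
    simpa using (hasDerivAt_id x).const_mul p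
  have h4 : HasDerivAt (fun y : ℝ => y ^ p) (p * x ^ (p - 1)) x :=
    Real.hasDerivAt_rpow_const (Or.inr hp)
  refine ((h2.sub h3).sub (h4.const_mul c)).congr_deriv ?_
  ring

lemma hasDerivAt_E (hp : 1 ≤ p) (c x : ℝ) :
    HasDerivAt (fun y : ℝ => (y - 1) ^ p + p * y - c * y ^ p)
      (p * (x - 1) ^ (p - 1) + p - c * (p * x ^ (p - 1))) x := by
  have h1 : HasDerivAt (fun y : ℝ => y - 1) 1 x := by
    simpa using (hasDerivAt_id x).sub_const (1:ℝ)
  have h2 := h1.rpow_const (p := p) (Or.inr hp)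
  have h3 : HasDerivAt (fun y : ℝ => p * y) p x := by
    simpa using (hasDerivAt_id x).const_mul p
  have h4 : HasDerivAt (fun y : ℝ => y ^ p) (p * x ^ (p - 1)) x :=
    Real.hasDerivAt_rpow_const (Or.inr hp)
  refine ((h2.add h3).sub (h4.const_mul c)).congr_deriv ?_
  ring

/-- generic "minimum at 0 on [-1,1]" lemma -/
lemma min_at_zero {f f' : ℝ → ℝ} (hc : Continuous f)
    (hd : ∀ x : ℝ, HasDerivAt f (f' x) x)
    (hpos : ∀ x, 0 < x → x < 1 → 0 ≤ f' x)
    (hneg : ∀ x, -1 < x → x < 0 → f' x ≤ 0)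
    {y : ℝ} (h1 : -1 ≤ y) (h2 : y ≤ 1) : f 0 ≤ f y := by
  rcases le_total y 0 with h | h
  · have hA : AntitoneOn f (Icc (-1) 0) := by
      apply antitoneOn_of_hasDerivWithinAt_nonpos (f' := f') (convex_Icc _ _) hc.continuousOn
      · simp only [interior_Icc]
        exact fun x hx => (hd x).hasDerivWithinAt
      · simp only [interior_Icc]
        exact fun x hx => hneg x hx.1 hx.2
    exact hA ⟨h1, h⟩ ⟨by norm_num, le_refl 0⟩ h
  · have hM : MonotoneOn f (Icc 0 1) := by
      apply monotoneOn_of_hasDerivWithinAt_nonneg (f' := f') (convex_Icc _ _) hc.continuousOn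
      · simp only [interior_Icc]
        exact fun x hx => (hd x).hasDerivWithinAt
      · simp only [interior_Icc]
        exact fun x hx => hpos x hx.1 hx.2
    exact hM ⟨le_refl 0, by norm_num⟩ ⟨h, h2⟩ h

/-- generic "increasing on [1,∞)" lemma -/
lemma mono_from_one {f f' : ℝ → ℝ} (hc : Continuous f)
    (hd : ∀ x : ℝ, HasDerivAt f (f' x) x)
    (hpos : ∀ x, 1 < x → 0 ≤ f' x)
    {u : ℝ} (hu : 1 ≤ u) : f 1 ≤ f u := by
  have hM : MonotoneOn f (Ici 1) := by
    apply monotoneOn_of_hasDerivWithinAt_nonneg (f' := f') (convex_Ici _) hc.continuousOn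
    · simp only [interior_Ici]
      exact fun x hx => (hd x).hasDerivWithinAt
    · simp only [interior_Ici]
      exact fun x hx => hpos x hx
  exact hM (mem_Ici.2 le_rfl) (mem_Ici.2 hu) hu

end Derivs

section Regions

variable {p : ℝ}

lemma cont_one_add_rpow (hp : 0 ≤ p) : Continuous fun y : ℝ => (1 + y) ^ p :=
  (continuous_const.add continuous_id).rpow_const (fun _ => Or.inr hp)

lemma cont_sub_one_rpow (hp : 0 ≤ p) : Continuous fun y : ℝ => (y - 1) ^ p :=
  (continuous_id.sub continuous_const).rpow_const (fun _ => Or.inr hp)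

lemma inner_low (hp : 1 < p) {y : ℝ} (h1 : -1 ≤ y) (h2 : y ≤ 1) :
    1 + p * y + (p - 1) / (p * 2 ^ p) * (p / 2 * y ^ 2) ≤ (1 + y) ^ p := by
  have h2p := two_rpow_pos p
  have hb : (p - 1) / (p * 2 ^ p) * (p / 2 * y ^ 2) = (p - 1) / 2 ^ p / 2 * y ^ 2 := by
    field_simp
  rw [hb]
  have hk : 0 ≤ (p - 1) / 2 ^ p := div_nonneg (by linarith) (by positivity)
  have key : (fun y : ℝ => (1 + y) ^ p - p * y - ((p - 1) / 2 ^ p / 2) * y ^ 2) 0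
      ≤ (fun y : ℝ => (1 + y) ^ p - p * y - ((p - 1) / 2 ^ p / 2) * y ^ 2) y := by
    refine min_at_zero (f := fun y : ℝ => (1 + y) ^ p - p * y - ((p - 1) / 2 ^ p / 2) * y ^ 2)
      (f' := fun x => p * (1 + x) ^ (p - 1) - p - 2 * ((p - 1) / 2 ^ p / 2) * x) ?_ ?_ ?_ ?_ h1 h2
    · exact ((cont_one_add_rpow (by linarith)).sub
        (continuous_const.mul continuous_id)).sub (continuous_const.mul (continuous_pow 2))
    · exact fun x => hasDerivAt_G hp.le p ((p - 1) / 2 ^ p / 2) x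
    · intro x hx0 hx1
      have hP := P1 hp (u := 1 + x) (by linarith) (by linarith)
      have hA : 0 ≤ (1 + x) ^ (p - 1) - 1 - (p - 1) / 2 ^ p * x := by nlinarith
      have h5 := mul_nonneg (show (0:ℝ) ≤ p by linarith) hA
      have h6 : 0 ≤ (p - 1) * ((p - 1) / 2 ^ p * x) :=
        mul_nonneg (by linarith) (mul_nonneg hk hx0.le)
      nlinarith
    · intro x hxm hx0
      have hP := P2 hp (u := 1 + x) (by linarith) (by linarith)
      have hA : (1 + x) ^ (p - 1) - 1 - (p - 1) / 2 ^ p * x ≤ 0 := by nlinarith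
      have h5 := mul_nonpos_of_nonneg_of_nonpos (show (0:ℝ) ≤ p by linarith) hA
      have h6 : (p - 1) * ((p - 1) / 2 ^ p * x) ≤ 0 :=
        mul_nonpos_of_nonneg_of_nonpos (by linarith) (mul_nonpos_of_nonneg_of_nonpos hk hx0.le)
      nlinarith
  simp only at key
  rw [add_zero, Real.one_rpow] at key
  nlinarith [key]

lemma inner_up (hp : 1 < p) {y : ℝ} (h1 : -1 ≤ y) (h2 : y ≤ 1) :
    (1 + y) ^ p ≤ 1 + p * y + 2 ^ p * (p / 2 * y ^ 2) := by
  have h2p := two_rpow_pos p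
  have hb : (2:ℝ) ^ p * (p / 2 * y ^ 2) = 2 ^ p * p / 2 * y ^ 2 := by ring
  rw [hb]
  have key : (fun y : ℝ => 1 + p * y + (2 ^ p * p / 2) * y ^ 2 - (1 + y) ^ p) 0
      ≤ (fun y : ℝ => 1 + p * y + (2 ^ p * p / 2) * y ^ 2 - (1 + y) ^ p) y := by
    refine min_at_zero (f := fun y : ℝ => 1 + p * y + (2 ^ p * p / 2) * y ^ 2 - (1 + y) ^ p)
      (f' := fun x => p + 2 * (2 ^ p * p / 2) * x - p * (1 + x) ^ (p - 1)) ?_ ?_ ?_ ?_ h1 h2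
    · exact ((continuous_const.add (continuous_const.mul continuous_id)).add
        (continuous_const.mul (continuous_pow 2))).sub (cont_one_add_rpow (by linarith))
    · exact fun x => hasDerivAt_H hp.le p (2 ^ p * p / 2) x
    · intro x hx0 hx1
      have hP := P3 hp (u := 1 + x) (by linarith) (by linarith)
      have h5 := mul_le_mul_of_nonneg_left hP (show (0:ℝ) ≤ p by linarith)
      nlinarith
    · intro x hxm hx0
      have hP := P4 hp (u := 1 + x) (by linarith) (by linarith)
      have h5 := mul_le_mul_of_nonneg_left hP (show (0:ℝ) ≤ p by linarith)
      nlinarith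
  simp only at key
  rw [add_zero, Real.one_rpow] at key
  nlinarith [key]

lemma outer_low_pos (hp : 1 < p) {y : ℝ} (hy : 1 ≤ y) :
    1 + p * y + (p - 1) / (p * 2 ^ p) * (y ^ p + (p / 2 - 1)) ≤ (1 + y) ^ p := by
  have h2p := two_rpow_pos p
  have hq2p := two_rpow_pos (p - 1)
  have hc0 : 0 ≤ (p - 1) / (p * 2 ^ p) := div_nonneg (by linarith) (by positivity)
  have key : (fun y : ℝ => (1 + y) ^ p - p * y - ((p - 1) / (p * 2 ^ p)) * y ^ p) 1
      ≤ (fun y : ℝ => (1 + y) ^ p - p * y - ((p - 1) / (p * 2 ^ p)) * y ^ p) y := by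
    refine mono_from_one (f := fun y : ℝ => (1 + y) ^ p - p * y - ((p - 1) / (p * 2 ^ p)) * y ^ p)
      (f' := fun x => p * (1 + x) ^ (p - 1) - p - ((p - 1) / (p * 2 ^ p)) * (p * x ^ (p - 1))) ?_ ?_ ?_ hy
    · exact ((cont_one_add_rpow (by linarith)).sub (continuous_const.mul continuous_id)).sub
        (continuous_const.mul (Real.continuous_rpow_const (by linarith)))
    · exact fun x => hasDerivAt_D hp.le ((p - 1) / (p * 2 ^ p)) x
    · intro x hx
      have hP := P5 hp (y := x) hx.le
      have h5 := mul_le_mul_of_nonneg_left hP (show (0:ℝ) ≤ p by linarith)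
      nlinarith
  simp only at key
  rw [Real.one_rpow] at key
  norm_num at key
  -- key : 2 ^ p - p - c ≤ (1 + y) ^ p - p * y - c * y ^ p    (with 1+1 = 2)
  -- need : 2 ^ p ≥ 1 + p + c * p / 2, i.e. 2^p - 1 - p ≥ (p-1)/(2 * 2^p)
  have hcs : ((p - 1) / (p * 2 ^ p)) * (p / 2) = (p - 1) / (2 * 2 ^ p) := by
    field_simp
  have ht := two_rpow_tangent (p - 1)
  have hl := log_two_ge
  have hsplit : (2:ℝ) ^ p = 2 * 2 ^ (p - 1) := two_rpow_split
  have hgap1 : (p - 1) / (2 * 2 ^ p) ≤ (p - 1) / 4 := by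
    rw [div_le_div_iff₀ (by positivity) (by norm_num)]
    nlinarith [two_le_two_rpow hp.le]
  have hgap2 : (p - 1) / 4 ≤ 2 ^ p - 1 - p := by
    nlinarith
  nlinarith [key]

lemma outer_low_neg (hp : 1 < p) {u : ℝ} (hu : 1 ≤ u) :
    1 - p * u + (p - 1) / (p * 2 ^ p) * (u ^ p + (p / 2 - 1)) ≤ (u - 1) ^ p := by
  have h2p := two_rpow_pos p
  have hc0 : 0 ≤ (p - 1) / (p * 2 ^ p) := div_nonneg (by linarith) (by positivity)
  have key : (fun y : ℝ => (y - 1) ^ p + p * y - ((p - 1) / (p * 2 ^ p)) * y ^ p) 1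
      ≤ (fun y : ℝ => (y - 1) ^ p + p * y - ((p - 1) / (p * 2 ^ p)) * y ^ p) u := by
    refine mono_from_one (f := fun y : ℝ => (y - 1) ^ p + p * y - ((p - 1) / (p * 2 ^ p)) * y ^ p)
      (f' := fun x => p * (x - 1) ^ (p - 1) + p - ((p - 1) / (p * 2 ^ p)) * (p * x ^ (p - 1))) ?_ ?_ ?_ hu
    · exact ((cont_sub_one_rpow (by linarith)).add (continuous_const.mul continuous_id)).sub
        (continuous_const.mul (Real.continuous_rpow_const (by linarith)))
    · exact fun x => hasDerivAt_E hp.le ((p - 1) / (p * 2 ^ p)) x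
    · intro x hx
      have hP := P6 hp (u := x) hx.le
      have h5 := mul_le_mul_of_nonneg_left hP (show (0:ℝ) ≤ p by linarith)
      nlinarith
  simp only at key
  rw [sub_self, Real.zero_rpow (by linarith : p ≠ 0), Real.one_rpow] at key
  -- key : 0 + p * 1 - c * 1 ≤ (u-1)^p + p u - c u^p
  have hcs : ((p - 1) / (p * 2 ^ p)) * (p / 2) = (p - 1) / (2 * 2 ^ p) := by
    field_simp
  have hgap : (p - 1) / (2 * 2 ^ p) ≤ p - 1 := by
    apply div_le_self (by linarith)
    nlinarith [two_le_two_rpow hp.le]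
  nlinarith [key]

lemma outer_up_pos (hp : 1 < p) {y : ℝ} (hy : 1 ≤ y) :
    (1 + y) ^ p ≤ 1 + p * y + 2 ^ p * (y ^ p + (p / 2 - 1)) := by
  have h2p := two_rpow_pos p
  have h1 : (1 + y) ^ p ≤ (2 * y) ^ p :=
    Real.rpow_le_rpow (by linarith) (by linarith) (by linarith)
  rw [Real.mul_rpow (by norm_num) (by linarith)] at h1
  -- need : 0 ≤ 1 + p*y + 2^p * p/2 - 2^p
  have hmain : (2:ℝ) ^ p ≤ 1 + p * y + 2 ^ p * (p / 2) := by
    rcases le_total p 2 with h | h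
    · have hch := two_rpow_le_chord hp.le h
      have h2ge := one_le_two_rpow (show (0:ℝ) ≤ p by linarith)
      nlinarith
    · have hsplit : (2:ℝ) ^ p = 2 * 2 ^ (p - 1) := two_rpow_split
      have h2q : (1:ℝ) ≤ 2 ^ (p - 1) := one_le_two_rpow (by linarith)
      nlinarith
  nlinarith [Real.rpow_nonneg (show (0:ℝ) ≤ y by linarith) p, h1, hmain]

lemma outer_up_neg (hp : 1 < p) {u : ℝ} (hu : 1 ≤ u) :
    (u - 1) ^ p ≤ 1 - p * u + 2 ^ p * (u ^ p + (p / 2 - 1)) := by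
  have h2p := two_rpow_pos p
  have h1 : (u - 1) ^ p ≤ u ^ p :=
    Real.rpow_le_rpow (by linarith) (by linarith) (by linarith)
  have h2 : u ^ (1:ℝ) ≤ u ^ p := Real.rpow_le_rpow_of_exponent_le hu (by linarith)
  rw [Real.rpow_one] at h2
  have hB := one_add_p_le hp
  have hq2 : (1:ℝ) ≤ 2 ^ (p - 1) := one_le_two_rpow (by linarith)
  have hsplit : (2:ℝ) ^ p = 2 * 2 ^ (p - 1) := two_rpow_split
  -- (2^p - 1) u^p ≥ (2^p - 1) u ≥ (2^p - 1 - p) + p u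
  have h3 : (2 ^ p - 1) * u ≤ (2 ^ p - 1) * u ^ p :=
    mul_le_mul_of_nonneg_left h2 (by linarith)
  nlinarith [h1, h3]

end Regions

section Assembly

variable {p : ℝ}

lemma key_one (hp : 1 < p) (y : ℝ) :
    1 + p * y + (p - 1) / (p * 2 ^ p) * gammaFn p 1 y ≤ |1 + y| ^ p ∧
      |1 + y| ^ p ≤ 1 + p * y + 2 ^ p * gammaFn p 1 y := by
  unfold gammaFn
  simp only [Real.one_rpow, mul_one]
  split_ifs with h
  · have hy := abs_le.1 h
    rw [abs_of_nonneg (by linarith [hy.1] : (0:ℝ) ≤ 1 + y)]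
    exact ⟨inner_low hp hy.1 hy.2, inner_up hp hy.1 hy.2⟩
  · push_neg at h
    rcases le_total 0 y with hy0 | hy0
    · rw [abs_of_nonneg hy0] at h ⊢
      rw [abs_of_nonneg (by linarith : (0:ℝ) ≤ 1 + y)]
      exact ⟨outer_low_pos hp h.le, outer_up_pos hp h.le⟩
    · rw [abs_of_nonpos hy0] at h ⊢
      rw [abs_of_nonpos (by linarith : 1 + y ≤ 0)]
      have hu : 1 ≤ -y := h.le
      have hl := outer_low_neg hp hu
      have hup := outer_up_neg hp hu
      rw [show -y - 1 = -(1 + y) by ring] at hl hup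
      constructor
      · calc 1 + p * y + (p - 1) / (p * 2 ^ p) * ((-y) ^ p + (p / 2 - 1))
            = 1 - p * (-y) + (p - 1) / (p * 2 ^ p) * ((-y) ^ p + (p / 2 - 1)) := by ring
          _ ≤ (-(1 + y)) ^ p := hl
      · calc (-(1 + y)) ^ p ≤ 1 - p * (-y) + 2 ^ p * ((-y) ^ p + (p / 2 - 1)) := hup
          _ = 1 + p * y + 2 ^ p * ((-y) ^ p + (p / 2 - 1)) := by ring

lemma gamma_neg (p t y : ℝ) : gammaFn p t (-y) = gammaFn p t y := by
  unfold gammaFn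
  rw [abs_neg, neg_pow]
  norm_num

lemma rpow_cancel {t : ℝ} (ht : 0 < t) (p : ℝ) : t ^ (p - 2) * t ^ 2 = t ^ p := by
  rw [← Real.rpow_natCast t 2, ← Real.rpow_add ht]
  norm_num

lemma gamma_scale {t : ℝ} (ht : 0 < t) (p y : ℝ) :
    gammaFn p t y = t ^ p * gammaFn p 1 (y / t) := by
  have ht2 : (0:ℝ) < t ^ 2 := by positivity
  have habs : |y / t| ≤ 1 ↔ |y| ≤ t := by
    rw [abs_div, abs_of_pos ht, div_le_one ht]
  unfold gammaFn
  by_cases h : |y| ≤ t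
  · rw [if_pos h, if_pos (habs.2 h), Real.one_rpow, mul_one, div_pow]
    rw [← rpow_cancel ht p]
    field_simp
  · rw [if_neg h, if_neg (fun hh => h (habs.1 hh)), Real.one_rpow, mul_one]
    rw [abs_div, abs_of_pos ht, Real.div_rpow (abs_nonneg y) ht.le]
    have htp : (0:ℝ) < t ^ p := Real.rpow_pos_of_pos ht p
    field_simp

lemma stmt_pos (p t y : ℝ) (hp : 1 < p) (ht : 0 < t) :
    |t| ^ p + (p * |t| ^ (p - 2) * t) * y
        + ((p - 1) / (p * 2 ^ p)) * gammaFn p |t| y ≤ |t + y| ^ p ∧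
      |t + y| ^ p ≤ |t| ^ p + (p * |t| ^ (p - 2) * t) * y
        + 2 ^ p * gammaFn p |t| y := by
  rw [abs_of_pos ht]
  obtain ⟨h1, h2⟩ := key_one hp (y / t)
  have htp : (0:ℝ) < t ^ p := Real.rpow_pos_of_pos ht p
  have ht0 : t ≠ 0 := ne_of_gt ht
  have e1 : t ^ p * |1 + y / t| ^ p = |t + y| ^ p := by
    rw [show t ^ p = |t| ^ p by rw [abs_of_pos ht], ← Real.mul_rpow (abs_nonneg t) (abs_nonneg _),
      ← abs_mul]
    congr 2
    field_simp
  have e2 : t ^ p * (y / t) = t ^ (p - 2) * t * y := by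
    rw [← rpow_cancel ht p]
    field_simp
  have e3 : ∀ C : ℝ, t ^ p * (1 + p * (y / t) + C * gammaFn p 1 (y / t))
      = t ^ p + (p * t ^ (p - 2) * t) * y + C * gammaFn p t y := by
    intro C
    rw [gamma_scale ht p y]
    have := e2
    nlinarith [e2]
  constructor
  · calc t ^ p + (p * t ^ (p - 2) * t) * y + (p - 1) / (p * 2 ^ p) * gammaFn p t y
        = t ^ p * (1 + p * (y / t) + (p - 1) / (p * 2 ^ p) * gammaFn p 1 (y / t)) :=
          (e3 _).symm
      _ ≤ t ^ p * |1 + y / t| ^ p := by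
          exact mul_le_mul_of_nonneg_left h1 htp.le
      _ = |t + y| ^ p := e1
  · calc |t + y| ^ p = t ^ p * |1 + y / t| ^ p := e1.symm
      _ ≤ t ^ p * (1 + p * (y / t) + 2 ^ p * gammaFn p 1 (y / t)) :=
          mul_le_mul_of_nonneg_left h2 htp.le
      _ = t ^ p + (p * t ^ (p - 2) * t) * y + 2 ^ p * gammaFn p t y := e3 _

end Assembly

end Stmt15Aux

open Stmt15Aux in
/-- for `1 < p` and any `t, y ∈ ℝ`, with `l = p|t|^{p−2}t`:
`|t|^p + ly + ((p−1)/(p2^p))γ_p(|t|,y) ≤ |t+y|^p ≤ |t|^p + ly + 2^p γ_p(|t|,y)`. -/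
theorem stmt15 (p t y : ℝ) (hp : 1 < p) :
    |t| ^ p + (p * |t| ^ (p - 2) * t) * y
        + ((p - 1) / (p * 2 ^ p)) * gammaFn p |t| y ≤ |t + y| ^ p ∧
      |t + y| ^ p ≤ |t| ^ p + (p * |t| ^ (p - 2) * t) * y
        + 2 ^ p * gammaFn p |t| y := by
  have h2p := two_rpow_pos p
  have hp0 : p ≠ 0 := by linarith
  rcases lt_trichotomy t 0 with ht | rfl | ht
  · have h := stmt_pos p (-t) (-y) hp (by linarith)
    rw [abs_neg, show -t + -y = -(t + y) by ring, abs_neg, gamma_neg] at h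
    obtain ⟨h1, h2⟩ := h
    constructor
    · calc |t| ^ p + (p * |t| ^ (p - 2) * t) * y
            + (p - 1) / (p * 2 ^ p) * gammaFn p |t| y
          = |t| ^ p + (p * |t| ^ (p - 2) * (-t)) * (-y)
            + (p - 1) / (p * 2 ^ p) * gammaFn p |t| y := by ring
        _ ≤ |t + y| ^ p := h1
    · calc |t + y| ^ p ≤ |t| ^ p + (p * |t| ^ (p - 2) * (-t)) * (-y)
            + 2 ^ p * gammaFn p |t| y := h2
        _ = |t| ^ p + (p * |t| ^ (p - 2) * t) * y + 2 ^ p * gammaFn p |t| y := by ring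
  · simp only [abs_zero, zero_add, Real.zero_rpow hp0, mul_zero, zero_mul, add_zero]
    by_cases hy : y = 0
    · subst hy
      simp only [gammaFn, abs_zero, le_refl, if_true, Real.zero_rpow hp0]
      norm_num
    · have hy0 : ¬ |y| ≤ 0 := by
        simp only [not_le]
        exact abs_pos.2 hy
      simp only [gammaFn, hy0, if_false, Real.zero_rpow hp0, mul_zero, add_zero]
      have hyp : (0:ℝ) ≤ |y| ^ p := Real.rpow_nonneg (abs_nonneg y) p
      have hc1 : (p - 1) / (p * 2 ^ p) ≤ 1 := by
        rw [div_le_one (by positivity)]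
        nlinarith [one_le_two_rpow (show (0:ℝ) ≤ p by linarith)]
      have h2ge : (1:ℝ) ≤ 2 ^ p := one_le_two_rpow (by linarith)
      have hc0 : 0 ≤ (p - 1) / (p * 2 ^ p) := div_nonneg (by linarith) (by positivity)
      constructor
      · nlinarith [mul_le_mul_of_nonneg_right hc1 hyp]
      · nlinarith [mul_le_mul_of_nonneg_right h2ge hyp]
  · exact stmt_pos p t y hp ht
end

section
/- Let 1 < p < ∞, t, y ∈ ℝ, and λ > 0. Then min{λ², λ^p}·γ_p(|t|, y) ≤ γ_p(|t|, λ·y) ≤ max{λ², λ^p}·γ_p(|t|, y). -/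
/-- Bernoulli, `1 ≤ c`. -/
lemma bern_ge {c x : ℝ} (hc : 1 ≤ c) (hx : 0 ≤ x) : 1 + c * (x - 1) ≤ x ^ c := by
  have h := one_add_mul_self_le_rpow_one_add (s := x - 1) (by linarith) hc
  simpa using h

/-- Bernoulli, `c ≤ 1`. -/
lemma bern_le {c x : ℝ} (hc0 : 0 ≤ c) (hc : c ≤ 1) (hx : 0 ≤ x) : x ^ c ≤ 1 + c * (x - 1) := by
  have h := rpow_one_add_le_one_add_mul_self (s := x - 1) (by linarith) hc0 hc
  simpa using h

lemma rpow_split {r c : ℝ} (hr : 0 < r) : r ^ c = r * r ^ (c - 1) := by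
  have h := Real.rpow_add hr 1 (c - 1)
  rw [show (1 : ℝ) + (c - 1) = c by ring, Real.rpow_one] at h
  exact h

/-- Tangent line inequality for the convex function `x ↦ x^c`, `1 ≤ c`. -/
lemma tan_ge {c s r : ℝ} (hc : 1 ≤ c) (hs : 0 ≤ s) (hr : 0 < r) :
    c * r ^ (c - 1) * s ≤ s ^ c + (c - 1) * r ^ c := by
  have hrc : 0 < r ^ c := Real.rpow_pos_of_pos hr c
  have hb := bern_ge hc (div_nonneg hs hr.le)
  rw [Real.div_rpow hs hr.le] at hb
  have h1 : (1 + c * (s / r - 1)) * r ^ c ≤ s ^ c := by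
    rw [← le_div_iff₀ hrc]; exact hb
  have key : (1 + c * (s / r - 1)) * r ^ c = r ^ c + c * r ^ (c - 1) * s - c * r ^ c := by
    rw [rpow_split hr]
    field_simp
    ring
  rw [key] at h1
  linarith

/-- Tangent line inequality for the concave function `x ↦ x^c`, `0 < c ≤ 1`. -/
lemma tan_le {c s r : ℝ} (hc0 : 0 ≤ c) (hc : c ≤ 1) (hs : 0 ≤ s) (hr : 0 < r) :
    s ^ c + (c - 1) * r ^ c ≤ c * r ^ (c - 1) * s := by
  have hrc : 0 < r ^ c := Real.rpow_pos_of_pos hr c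
  have hb := bern_le hc0 hc (div_nonneg hs hr.le)
  rw [Real.div_rpow hs hr.le] at hb
  have h1 : s ^ c ≤ (1 + c * (s / r - 1)) * r ^ c := by
    rw [← div_le_iff₀ hrc]; exact hb
  have key : (1 + c * (s / r - 1)) * r ^ c = r ^ c + c * r ^ (c - 1) * s - c * r ^ c := by
    rw [rpow_split hr]
    field_simp
    ring
  rw [key] at h1
  linarith

lemma sq_rpow {x : ℝ} (hx : 0 ≤ x) (q : ℝ) : (x ^ 2 : ℝ) ^ q = x ^ (2 * q) := by
  rw [← Real.rpow_two, ← Real.rpow_mul hx]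

set_option maxHeartbeats 1000000 in
lemma key_lemma (p T a lam : ℝ) (hp : 1 < p) (hT : 0 ≤ T) (ha : 0 ≤ a) (hlam : 1 ≤ lam) :
    min (lam ^ 2) (lam ^ p) * gammaFn p T a ≤ gammaFn p T (lam * a) ∧
      gammaFn p T (lam * a) ≤ max (lam ^ 2) (lam ^ p) * gammaFn p T a := by
  have hl0 : (0 : ℝ) < lam := lt_of_lt_of_le one_pos hlam
  have hla : 0 ≤ lam * a := mul_nonneg hl0.le ha
  have hp0 : (0 : ℝ) < p := by linarith
  have h2r : lam ^ (2 : ℝ) = lam ^ 2 := Real.rpow_two lam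
  have hTp : (0 : ℝ) ≤ T ^ p := Real.rpow_nonneg hT p
  have hl1 : (1 : ℝ) ≤ lam ^ p := Real.one_le_rpow hlam hp0.le
  have hlsq : (1 : ℝ) ≤ lam ^ 2 := one_le_pow₀ hlam
  simp only [gammaFn, abs_of_nonneg ha, abs_of_nonneg hla]
  by_cases h1 : a ≤ T
  · by_cases h2 : lam * a ≤ T
    · -- Case A : both in quadratic region
      simp only [if_pos h1, if_pos h2]
      have hg : 0 ≤ p / 2 * T ^ (p - 2) * a ^ 2 := by positivity
      have e : p / 2 * T ^ (p - 2) * (lam * a) ^ 2 = lam ^ 2 * (p / 2 * T ^ (p - 2) * a ^ 2) := by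
        ring
      rw [e]
      exact ⟨mul_le_mul_of_nonneg_right (min_le_left _ _) hg,
        mul_le_mul_of_nonneg_right (le_max_left _ _) hg⟩
    · -- Case B : a ≤ T < lam * a
      push_neg at h2
      simp only [if_pos h1, if_neg (not_le.mpr h2)]
      have ha0 : 0 < a := by
        by_contra h
        push_neg at h
        have : lam * a ≤ 0 := mul_nonpos_of_nonneg_of_nonpos hl0.le h
        linarith
      have hT0 : 0 < T := lt_of_lt_of_le ha0 h1
      have hmul : (lam * a) ^ p = lam ^ p * a ^ p := Real.mul_rpow hl0.le ha
      have hTle : T ^ p ≤ (lam * a) ^ p := Real.rpow_le_rpow hT h2.le hp0.le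
      have hap : (0 : ℝ) ≤ a ^ p := Real.rpow_nonneg ha p
      by_cases hp2 : 2 ≤ p
      · -- p ≥ 2
        have hmin : min (lam ^ 2) (lam ^ p) = lam ^ 2 := by
          apply min_eq_left
          rw [← h2r]
          exact Real.rpow_le_rpow_of_exponent_le hlam hp2
        have hmax : max (lam ^ 2) (lam ^ p) = lam ^ p := by
          apply max_eq_right
          rw [← h2r]
          exact Real.rpow_le_rpow_of_exponent_le hlam hp2
        rw [hmin, hmax]
        have hd : (0 : ℝ) ≤ p / 2 - 1 := by linarith
        constructor
        · -- tangent (convex) : lower bound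
          have htan := tan_ge (c := p / 2) (s := (lam * a) ^ 2) (r := T ^ 2)
            (by linarith) (by positivity) (by positivity)
          rw [sq_rpow hT0.le, sq_rpow hla, sq_rpow hT0.le] at htan
          have e1 : 2 * (p / 2 - 1) = p - 2 := by ring
          have e2 : 2 * (p / 2) = p := by ring
          rw [e1, e2] at htan
          nlinarith [htan]
        · -- chain : upper bound
          have step1 : (lam * a) ^ p + (p / 2 - 1) * T ^ p ≤ p / 2 * (lam * a) ^ p := by
            nlinarith [mul_le_mul_of_nonneg_left hTle hd]
          have hsplit : a ^ p = a ^ (p - 2) * a ^ 2 := by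
            rw [← Real.rpow_two, ← Real.rpow_add ha0]
            ring_nf
          have hbase : a ^ (p - 2) ≤ T ^ (p - 2) :=
            Real.rpow_le_rpow ha0.le h1 (by linarith)
          have step2 : a ^ p ≤ T ^ (p - 2) * a ^ 2 := by
            rw [hsplit]
            exact mul_le_mul_of_nonneg_right hbase (by positivity)
          have hlp : (0 : ℝ) ≤ lam ^ p := by positivity
          nlinarith [mul_le_mul_of_nonneg_left step2 (mul_nonneg (by linarith : (0:ℝ) ≤ p / 2) hlp)]
      · -- p < 2
        push_neg at hp2
        have hmin : min (lam ^ 2) (lam ^ p) = lam ^ p := by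
          apply min_eq_right
          rw [← h2r]
          exact Real.rpow_le_rpow_of_exponent_le hlam hp2.le
        have hmax : max (lam ^ 2) (lam ^ p) = lam ^ 2 := by
          apply max_eq_left
          rw [← h2r]
          exact Real.rpow_le_rpow_of_exponent_le hlam hp2.le
        rw [hmin, hmax]
        have hd : p / 2 - 1 ≤ 0 := by linarith
        constructor
        · -- chain : lower bound
          have hbase : T ^ (p - 2) ≤ a ^ (p - 2) :=
            Real.rpow_le_rpow_of_nonpos ha0 h1 (by linarith)
          have hsplit : a ^ p = a ^ (p - 2) * a ^ 2 := by
            rw [← Real.rpow_two, ← Real.rpow_add ha0]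
            ring_nf
          have step2 : T ^ (p - 2) * a ^ 2 ≤ a ^ p := by
            rw [hsplit]
            exact mul_le_mul_of_nonneg_right hbase (by positivity)
          have hlp : (0 : ℝ) ≤ lam ^ p := by positivity
          rw [hmul]
          nlinarith [mul_le_mul_of_nonneg_left step2 (mul_nonneg (by linarith : (0:ℝ) ≤ p / 2) hlp),
            mul_le_mul_of_nonpos_left hTle hd, hmul]
        · -- tangent (concave) : upper bound
          have htan := tan_le (c := p / 2) (s := (lam * a) ^ 2) (r := T ^ 2)
            (by linarith) (by linarith) (by positivity) (by positivity)
          rw [sq_rpow hT0.le, sq_rpow hla, sq_rpow hT0.le] at htan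
          have e1 : 2 * (p / 2 - 1) = p - 2 := by ring
          have e2 : 2 * (p / 2) = p := by ring
          rw [e1, e2] at htan
          nlinarith [htan]
  · by_cases h2 : lam * a ≤ T
    · -- Case C : impossible since lam ≥ 1
      exfalso
      push_neg at h1
      have : a ≤ lam * a := le_mul_of_one_le_left ha hlam
      linarith
    · -- Case D : both in power region
      push_neg at h1 h2
      simp only [if_neg (not_le.mpr h1), if_neg (not_le.mpr h2)]
      have hmul : (lam * a) ^ p = lam ^ p * a ^ p := Real.mul_rpow hl0.le ha
      have hTa : T ^ p ≤ a ^ p := Real.rpow_le_rpow hT h1.le hp0.le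
      have hap : (0 : ℝ) ≤ a ^ p := Real.rpow_nonneg ha p
      have hbsq : (lam ^ 2 : ℝ) ^ (p / 2) = lam ^ p := by
        rw [sq_rpow hl0.le, show (2 : ℝ) * (p / 2) = p by ring]
      by_cases hp2 : 2 ≤ p
      · have hmin : min (lam ^ 2) (lam ^ p) = lam ^ 2 := by
          apply min_eq_left
          rw [← h2r]
          exact Real.rpow_le_rpow_of_exponent_le hlam hp2
        have hmax : max (lam ^ 2) (lam ^ p) = lam ^ p := by
          apply max_eq_right
          rw [← h2r]
          exact Real.rpow_le_rpow_of_exponent_le hlam hp2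
        rw [hmin, hmax, hmul]
        have hd : (0 : ℝ) ≤ p / 2 - 1 := by linarith
        have hb := bern_ge (c := p / 2) (x := lam ^ 2) (by linarith) (by positivity)
        rw [hbsq] at hb
        constructor
        · -- lower
          have h1' : (p / 2 - 1) * (lam ^ 2 - 1) * T ^ p ≤ (p / 2 - 1) * (lam ^ 2 - 1) * a ^ p :=
            mul_le_mul_of_nonneg_left hTa
              (mul_nonneg hd (by linarith))
          have h2' : (p / 2 - 1) * (lam ^ 2 - 1) * a ^ p ≤ (lam ^ p - lam ^ 2) * a ^ p :=
            mul_le_mul_of_nonneg_right (by linarith [hb]) hap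
          nlinarith [h1', h2']
        · -- upper
          nlinarith [mul_nonneg hd hTp, hl1]
      · push_neg at hp2
        have hmin : min (lam ^ 2) (lam ^ p) = lam ^ p := by
          apply min_eq_right
          rw [← h2r]
          exact Real.rpow_le_rpow_of_exponent_le hlam hp2.le
        have hmax : max (lam ^ 2) (lam ^ p) = lam ^ 2 := by
          apply max_eq_left
          rw [← h2r]
          exact Real.rpow_le_rpow_of_exponent_le hlam hp2.le
        rw [hmin, hmax, hmul]
        have hd : p / 2 - 1 ≤ 0 := by linarith
        have hb := bern_le (c := p / 2) (x := lam ^ 2) (by linarith) (by linarith) (by positivity)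
        rw [hbsq] at hb
        constructor
        · -- lower
          nlinarith [mul_nonpos_of_nonpos_of_nonneg hd hTp, hl1]
        · -- upper
          have h1' : (lam ^ p - lam ^ 2) * a ^ p ≤ (lam ^ p - lam ^ 2) * T ^ p := by
            apply mul_le_mul_of_nonpos_left hTa
            rw [← h2r]
            have := Real.rpow_le_rpow_of_exponent_le hlam hp2.le
            linarith
          have h2' : (lam ^ p - lam ^ 2) * T ^ p ≤ (p / 2 - 1) * (lam ^ 2 - 1) * T ^ p :=
            mul_le_mul_of_nonneg_right (by linarith [hb]) hTp
          nlinarith [h1', h2']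

lemma gammaFn_abs (p t y : ℝ) : gammaFn p t |y| = gammaFn p t y := by
  simp [gammaFn, abs_abs, sq_abs]

/-- for `1 < p`, `t, y ∈ ℝ`, `λ > 0`:
`min{λ², λ^p}γ_p(|t|, y) ≤ γ_p(|t|, λy) ≤ max{λ², λ^p}γ_p(|t|, y)`. -/
theorem stmt16 (p t y lam : ℝ) (hp : 1 < p) (hlam : 0 < lam) :
    min (lam ^ 2) (lam ^ p) * gammaFn p |t| y ≤ gammaFn p |t| (lam * y) ∧
      gammaFn p |t| (lam * y) ≤ max (lam ^ 2) (lam ^ p) * gammaFn p |t| y := by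
  have habs : |lam * y| = lam * |y| := by rw [abs_mul, abs_of_pos hlam]
  have hgy : gammaFn p |t| y = gammaFn p |t| |y| := (gammaFn_abs p |t| y).symm
  have hgly : gammaFn p |t| (lam * y) = gammaFn p |t| (lam * |y|) := by
    rw [← gammaFn_abs p |t| (lam * y), habs]
  rw [hgy, hgly]
  rcases le_or_gt 1 lam with h | h
  · exact key_lemma p |t| |y| lam hp (abs_nonneg t) (abs_nonneg y) h
  · have hinv : 1 ≤ lam⁻¹ := one_le_inv_iff₀.mpr ⟨hlam, h.le⟩
    have hkey := key_lemma p |t| (lam * |y|) lam⁻¹ hp (abs_nonneg t)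
      (mul_nonneg hlam.le (abs_nonneg y)) hinv
    rw [inv_mul_cancel_left₀ hlam.ne'] at hkey
    have hsq : (lam⁻¹) ^ 2 = (lam ^ 2)⁻¹ := inv_pow lam 2
    have hpw : (lam⁻¹) ^ p = (lam ^ p)⁻¹ := Real.inv_rpow hlam.le p
    have hsqpos : (0 : ℝ) < lam ^ 2 := by positivity
    have hppos : (0 : ℝ) < lam ^ p := Real.rpow_pos_of_pos hlam p
    have hminmax : min ((lam⁻¹) ^ 2) ((lam⁻¹) ^ p) = (max (lam ^ 2) (lam ^ p))⁻¹ := by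
      rw [hsq, hpw]
      rcases le_total (lam ^ 2) (lam ^ p) with hc | hc
      · rw [max_eq_right hc, min_eq_right (by
          exact inv_anti₀ hsqpos hc)]
      · rw [max_eq_left hc, min_eq_left (by
          exact inv_anti₀ hppos hc)]
    have hmaxmin : max ((lam⁻¹) ^ 2) ((lam⁻¹) ^ p) = (min (lam ^ 2) (lam ^ p))⁻¹ := by
      rw [hsq, hpw]
      rcases le_total (lam ^ 2) (lam ^ p) with hc | hc
      · rw [min_eq_left hc, max_eq_left (by
          exact inv_anti₀ hsqpos hc)]
      · rw [min_eq_right hc, max_eq_right (by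
          exact inv_anti₀ hppos hc)]
    rw [hminmax, hmaxmin] at hkey
    have hMpos : 0 < max (lam ^ 2) (lam ^ p) := lt_max_of_lt_left hsqpos
    have hmpos : 0 < min (lam ^ 2) (lam ^ p) := lt_min hsqpos hppos
    constructor
    · have h2' := hkey.2
      rw [le_inv_mul_iff₀ hmpos] at h2'
      exact h2'
    · have h1' := hkey.1
      rw [inv_mul_le_iff₀ hMpos] at h1'
      exact h1'
end
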